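/- For all i > j ≥ 0 and all coefficient sequences a, b, the ψ-derivative of the opposite Fontané product satisfies D(a ⋆_{i,j} b) = (D a) (⋆_{i+1,j}⋆_{1,0}) b + a ⋆_{i+1,j+1} (D b), where ⋆_{i+1,j}⋆_{1,0} denotes the concatenated opposite product with kernel F(n+i+1, n−k+j)·F(n+1, n−k). -/

import Mathlib

open Finset

/-- The ψ-factorial: ψₙ! = ψ₁ψ₂⋯ψₙ, with ψ₀! = 1. -/
noncomputable def psiFact (ψ : ℕ → ℂ) : ℕ → ℂ
  | 0 => 1
  | n + 1 => psiFact ψ n * ψ (n + 1)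

/-- The ψ-binomial coefficient binomψ(n,k) = ψₙ!/(ψₖ!·ψ_{n−k}!). -/
noncomputable def psiBinom (ψ : ℕ → ℂ) (n k : ℕ) : ℂ :=
  psiFact ψ n / (psiFact ψ k * psiFact ψ (n - k))

/-- The Fontané numbers F(n,k) = (ψₙ − ψₖ)/ψ_{n−k}. -/
noncomputable def Fker (ψ : ℕ → ℂ) (n k : ℕ) : ℂ :=
  (ψ n - ψ k) / ψ (n - k)

/-- The opposite Fontané product ⋆_{i,j} of coefficient sequences. -/
noncomputable def oppFontane (ψ : ℕ → ℂ) (i j : ℕ) (a b : ℕ → ℂ) (n : ℕ) : ℂ :=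
  ∑ k ∈ Finset.range (n + 1), Fker ψ (n + i) (n - k + j) * psiBinom ψ n k * a k * b (n - k)

/-- The concatenated opposite Fontané product ⋆_{i₁,j₁}⋆_{i₂,j₂}. -/
noncomputable def oppFontane2 (ψ : ℕ → ℂ) (i₁ j₁ i₂ j₂ : ℕ) (a b : ℕ → ℂ) (n : ℕ) : ℂ :=
  ∑ k ∈ Finset.range (n + 1),
    Fker ψ (n + i₁) (n - k + j₁) * Fker ψ (n + i₂) (n - k + j₂) * psiBinom ψ n k * a k * b (n - k)

/-- The ψ-derivative on coefficient sequences: the shift (D a)ₙ = a_{n+1}. -/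
def Dpsi (a : ℕ → ℂ) (n : ℕ) : ℂ := a (n + 1)

lemma psiFact_ne_zero (ψ : ℕ → ℂ) (hψ : ∀ n : ℕ, 1 ≤ n → ψ n ≠ 0) (n : ℕ) :
    psiFact ψ n ≠ 0 := by
  induction n with
  | zero => simp [psiFact]
  | succ m ih => exact mul_ne_zero ih (hψ (m + 1) (Nat.le_add_left 1 m))

lemma psiBinom_zero (ψ : ℕ → ℂ) (hψ : ∀ n : ℕ, 1 ≤ n → ψ n ≠ 0) (n : ℕ) :
    psiBinom ψ n 0 = 1 := by
  simp [psiBinom, psiFact, div_self (psiFact_ne_zero ψ hψ n)]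

lemma psiBinom_self (ψ : ℕ → ℂ) (hψ : ∀ n : ℕ, 1 ≤ n → ψ n ≠ 0) (n : ℕ) :
    psiBinom ψ n n = 1 := by
  simp [psiBinom, psiFact, div_self (psiFact_ne_zero ψ hψ n)]

lemma psiPascal (ψ : ℕ → ℂ) (hψ : ∀ n : ℕ, 1 ≤ n → ψ n ≠ 0) (n k : ℕ) (hk : k < n) :
    psiBinom ψ (n + 1) (k + 1)
      = Fker ψ (n + 1) (n - k) * psiBinom ψ n k + psiBinom ψ n (k + 1) := by
  set m := n - k - 1 with hm
  have h1 : n - k = m + 1 := by omega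
  have h2 : n + 1 - (k + 1) = m + 1 := by omega
  have h3 : n - (k + 1) = m := by omega
  have h4 : n + 1 - (n - k) = k + 1 := by omega
  have h5 : n + 1 - (m + 1) = k + 1 := by omega
  rw [psiBinom, psiBinom, psiBinom, Fker, h1, h2, h3, h5]
  have e1 : psiFact ψ (n + 1) = psiFact ψ n * ψ (n + 1) := rfl
  have e2 : psiFact ψ (m + 1) = psiFact ψ m * ψ (m + 1) := rfl
  have e3 : psiFact ψ (k + 1) = psiFact ψ k * ψ (k + 1) := rfl
  rw [e1, e2, e3]
  have hfk := psiFact_ne_zero ψ hψ k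
  have hfm := psiFact_ne_zero ψ hψ m
  have hk1 := hψ (k + 1) (by omega)
  have hm1 := hψ (m + 1) (by omega)
  have hk1' : ψ (1 + k) ≠ 0 := by rwa [add_comm]
  have hm1' : ψ (1 + m) ≠ 0 := by rwa [add_comm]
  field_simp
  ring

/-- The ψ-derivative of the opposite Fontané product:
D(a ⋆_{i,j} b) = (D a) (⋆_{i+1,j}⋆_{1,0}) b + a ⋆_{i+1,j+1} (D b). -/
theorem Dpsi_oppFontane (ψ : ℕ → ℂ) (hψ0 : ψ 0 = 0) (hψ1 : ψ 1 = 1) (hψ : ∀ n : ℕ, 1 ≤ n → ψ n ≠ 0)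
    (i j : ℕ) (hij : j < i) (a b : ℕ → ℂ) (n : ℕ) :
    Dpsi (oppFontane ψ i j a b) n
      = oppFontane2 ψ (i + 1) j 1 0 (Dpsi a) b n
        + oppFontane ψ (i + 1) (j + 1) a (Dpsi b) n := by
  simp only [Dpsi, oppFontane, oppFontane2]
  have hU : (∑ k ∈ Finset.range (n + 1),
        Fker ψ (n + (i + 1)) (n - k + j) * Fker ψ (n + 1) (n - k + 0) * psiBinom ψ n k
          * a (k + 1) * b (n - k))
      = ∑ k ∈ Finset.range (n + 1),
        Fker ψ (n + 1 + i) (n - k + j) * Fker ψ (n + 1) (n - k) * psiBinom ψ n k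
          * a (k + 1) * b (n - k) := by
    apply Finset.sum_congr rfl
    intro k hk
    have e1 : n + (i + 1) = n + 1 + i := by omega
    simp [e1]
  have hV : (∑ k ∈ Finset.range (n + 1),
        Fker ψ (n + (i + 1)) (n - k + (j + 1)) * psiBinom ψ n k * a k * b (n - k + 1))
      = ∑ k ∈ Finset.range (n + 1),
        Fker ψ (n + 1 + i) (n + 1 - k + j) * psiBinom ψ n k * a k * b (n + 1 - k) := by
    apply Finset.sum_congr rfl
    intro k hk
    have hk' := Finset.mem_range.mp hk
    have e1 : n + (i + 1) = n + 1 + i := by omega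
    have e2 : n - k + (j + 1) = n + 1 - k + j := by omega
    have e3 : n - k + 1 = n + 1 - k := by omega
    rw [e1, e2, e3]
  rw [hU, hV]
  rw [Finset.sum_range_succ' _ (n + 1), Finset.sum_range_succ]
  rw [Finset.sum_range_succ
      (fun k => Fker ψ (n + 1 + i) (n - k + j) * Fker ψ (n + 1) (n - k) * psiBinom ψ n k
        * a (k + 1) * b (n - k))]
  rw [Finset.sum_range_succ'
      (fun k => Fker ψ (n + 1 + i) (n + 1 - k + j) * psiBinom ψ n k * a k * b (n + 1 - k))]
  have h0 : Fker ψ (n + 1 + i) (n + 1 - 0 + j) * psiBinom ψ (n + 1) 0 * a 0 * b (n + 1 - 0)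
      = Fker ψ (n + 1 + i) (n + 1 - 0 + j) * psiBinom ψ n 0 * a 0 * b (n + 1 - 0) := by
    rw [psiBinom_zero ψ hψ, psiBinom_zero ψ hψ]
  have hn : Fker ψ (n + 1 + i) (n + 1 - (n + 1) + j) * psiBinom ψ (n + 1) (n + 1) * a (n + 1)
        * b (n + 1 - (n + 1))
      = Fker ψ (n + 1 + i) (n - n + j) * Fker ψ (n + 1) (n - n) * psiBinom ψ n n
        * a (n + 1) * b (n - n) := by
    have e1 : n + 1 - (n + 1) = 0 := by omega
    have e2 : n - n = 0 := by omega
    rw [e1, e2, psiBinom_self ψ hψ, psiBinom_self ψ hψ]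
    have : Fker ψ (n + 1) 0 = 1 := by
      simp [Fker, hψ0, div_self (hψ (n + 1) (by omega))]
    rw [this]
    ring
  have key : (∑ k ∈ Finset.range n,
        Fker ψ (n + 1 + i) (n + 1 - (k + 1) + j) * psiBinom ψ (n + 1) (k + 1) * a (k + 1)
          * b (n + 1 - (k + 1)))
      = (∑ k ∈ Finset.range n,
          Fker ψ (n + 1 + i) (n - k + j) * Fker ψ (n + 1) (n - k) * psiBinom ψ n k
            * a (k + 1) * b (n - k))
        + ∑ k ∈ Finset.range n,
          Fker ψ (n + 1 + i) (n + 1 - (k + 1) + j) * psiBinom ψ n (k + 1) * a (k + 1)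
            * b (n + 1 - (k + 1)) := by
    rw [← Finset.sum_add_distrib]
    apply Finset.sum_congr rfl
    intro k hk
    have hk' := Finset.mem_range.mp hk
    have e1 : n + 1 - (k + 1) = n - k := by omega
    rw [e1, psiPascal ψ hψ n k hk']
    ring
  rw [key, hn, h0]
  ring
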